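/- Let ϱ ∈ (0,1) and a_k = k^{1/ϱ} for k ≥ 1, and let F(x) = ∏_{k=1}^∞ (1 + x/a_k). Then for every x > 0, F(x) = exp((π/sin(πϱ)) x^ϱ)·ψ(x) where exp(-1/ϱ)/(1+x) ≤ ψ(x) ≤ exp(-(1/ϱ)·x/(1+x)). -/

import Mathlib

open Real MeasureTheory Set Filter Topology intervalIntegral

lemma aux_image1 : (fun s : ℝ => s / (1+s)) '' (Ioi 0) = Ioo 0 1 := by
  ext y
  constructor
  · rintro ⟨s, hs, rfl⟩
    have hs' : (0:ℝ) < s := hs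
    have h1 : (0:ℝ) < 1 + s := by linarith
    constructor
    · positivity
    · rw [div_lt_one h1]; linarith
  · rintro ⟨hy0, hy1⟩
    refine ⟨y / (1 - y), ?_, ?_⟩
    · exact div_pos hy0 (by linarith)
    · have h : (1:ℝ) - y ≠ 0 := by linarith
      field_simp
      ring

lemma aux_inj1 : InjOn (fun s : ℝ => s / (1+s)) (Ioi 0) := by
  intro s hs t ht h
  have hs' : (0:ℝ) < s := hs
  have ht' : (0:ℝ) < t := ht
  have h1 : (1:ℝ) + s ≠ 0 := by linarith
  have h2 : (1:ℝ) + t ≠ 0 := by linarith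
  field_simp at h
  linarith

lemma aux_beta_cval (a : ℝ) (h0 : 0 < a) (h1 : a < 1) :
    Complex.betaIntegral a (1-a) = ↑(π / Real.sin (π * a)) := by
  have hre : 0 < (a:ℂ).re := by simpa using h0
  have hre' : 0 < ((1:ℂ)-a).re := by simp [Complex.sub_re]; linarith
  have h := Complex.Gamma_mul_Gamma_eq_betaIntegral hre hre'
  rw [show (a:ℂ) + (1 - a) = 1 by ring, Complex.Gamma_one, one_mul] at h
  rw [← h, Complex.Gamma_mul_Gamma_one_sub]
  push_cast [Complex.ofReal_sin]
  norm_num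

lemma aux_beta_real (a : ℝ) (h0 : 0 < a) (h1 : a < 1) :
    ∫ t in Ioc (0:ℝ) 1, t ^ (a-1) * (1-t) ^ (-a) = π / Real.sin (π * a) := by
  have key : ((∫ t in Ioc (0:ℝ) 1, t ^ (a-1) * (1-t) ^ (-a) : ℝ) : ℂ)
      = Complex.betaIntegral a (1-a) := by
    rw [Complex.betaIntegral]
    have hco : ∀ r : ℝ, Complex.ofReal r = @RCLike.ofReal ℂ _ r := fun r => rfl
    rw [intervalIntegral.integral_of_le (zero_le_one)]
    conv_lhs => rw [hco, ← _root_.integral_ofReal]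
    refine setIntegral_congr_fun measurableSet_Ioc (fun t ht => ?_)
    have ht0 : (0:ℝ) ≤ t := le_of_lt ht.1
    have ht1 : (0:ℝ) ≤ 1 - t := by linarith [ht.2]
    rw [← hco, Complex.ofReal_mul, Complex.ofReal_cpow ht0, Complex.ofReal_cpow ht1,
      show (1 - (a:ℂ) - 1) = -(a:ℂ) by ring]
    push_cast
    ring_nf
  have := aux_beta_cval a h0 h1
  rw [this] at key
  exact_mod_cast key

lemma aux_beta (a : ℝ) (h0 : 0 < a) (h1 : a < 1) :
    ∫ s in Ioi (0:ℝ), s ^ (a-1) / (1+s) = π / Real.sin (π * a) := by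
  have hderiv : ∀ s ∈ Ioi (0:ℝ), HasDerivWithinAt (fun s : ℝ => s / (1+s))
      (((1+s)^2)⁻¹) (Ioi 0) s := by
    intro s hs
    have hs' : (0:ℝ) < s := hs
    have h1 : (1:ℝ) + s ≠ 0 := by linarith
    have h : HasDerivAt (fun s : ℝ => s / (1+s))
        ((1 * (1+s) - s * 1)/((1+s)^2)) s :=
      (hasDerivAt_id s).div ((hasDerivAt_id s).const_add 1) h1
    have h2 : (1 * (1+s) - s * 1)/((1+s)^2) = ((1+s)^2)⁻¹ := by field_simp; ring
    rw [h2] at h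
    exact h.hasDerivWithinAt
  have himg := MeasureTheory.integral_image_eq_integral_abs_deriv_smul measurableSet_Ioi
    hderiv aux_inj1 (fun t : ℝ => t ^ (a-1) * (1-t) ^ (-a))
  rw [aux_image1] at himg
  have heq : ∫ s in Ioi (0:ℝ),
      |((1+s)^2)⁻¹| • ((fun t : ℝ => t ^ (a-1) * (1-t) ^ (-a)) (s/(1+s)))
      = ∫ s in Ioi (0:ℝ), s ^ (a-1) / (1+s) := by
    refine setIntegral_congr_fun measurableSet_Ioi (fun s hs => ?_)
    have hs' : (0:ℝ) < s := hs
    have h1 : (0:ℝ) < 1 + s := by linarith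
    have h1' : (1:ℝ) + s ≠ 0 := ne_of_gt h1
    have hu : (0:ℝ) < (1+s) ^ (a-1) := Real.rpow_pos_of_pos h1 _
    have e1 : (1:ℝ) - s/(1+s) = (1+s)⁻¹ := by field_simp; ring
    have e2 : (s/(1+s) : ℝ) ^ (a-1) = s ^ (a-1) / ((1+s) ^ (a-1)) :=
      Real.div_rpow hs'.le h1.le (a-1)
    have e3 : ((1+s : ℝ)⁻¹) ^ (-a) = ((1+s) ^ a) := by
      rw [Real.inv_rpow h1.le, Real.rpow_neg h1.le, inv_inv]
    have e4 : ((1+s):ℝ) ^ a = (1+s) ^ (a-1) * (1+s) := by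
      have := Real.rpow_add h1 (a-1) 1
      rw [sub_add_cancel, Real.rpow_one] at this
      exact this
    simp only [smul_eq_mul, abs_of_pos (inv_pos.mpr (pow_pos h1 2))]
    rw [e1, e2, e3, e4]
    field_simp
  rw [heq] at himg
  rw [← himg, ← MeasureTheory.integral_Ioc_eq_integral_Ioo]
  exact aux_beta_real a h0 h1

lemma aux_cont (b : ℝ) : ContinuousOn (fun s : ℝ => s ^ b / (1+s)) (Ioi 0) := by
  apply ContinuousOn.div
  · exact continuousOn_id.rpow_const (fun s hs => Or.inl (ne_of_gt hs))
  · fun_prop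
  · intro s hs; have : (0:ℝ) < s := hs; positivity

lemma aux_beta_integrable (a : ℝ) (h0 : 0 < a) (h1 : a < 1) :
    IntegrableOn (fun s : ℝ => s ^ (a-1) / (1+s)) (Ioi 0) := by
  have h01 : IntegrableOn (fun s : ℝ => s ^ (a-1) / (1+s)) (Ioc 0 1) := by
    have hbint : IntegrableOn (fun s : ℝ => s ^ (a-1)) (Ioc 0 1) := by
      have := intervalIntegral.intervalIntegrable_rpow' (a := 0) (b := 1)
        (show (-1:ℝ) < a - 1 by linarith)
      rwa [intervalIntegrable_iff_integrableOn_Ioc_of_le zero_le_one] at this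
    refine Integrable.mono' hbint
      (((aux_cont (a-1)).mono Ioc_subset_Ioi_self).aestronglyMeasurable measurableSet_Ioc) ?_
    refine (ae_restrict_iff' measurableSet_Ioc).mpr (ae_of_all _ fun s hs => ?_)
    have hs0 : (0:ℝ) < s := hs.1
    rw [Real.norm_eq_abs, abs_of_nonneg (by positivity)]
    apply div_le_self (by positivity)
    linarith
  have h1i : IntegrableOn (fun s : ℝ => s ^ (a-1) / (1+s)) (Ioi 1) := by
    have hbint : IntegrableOn (fun s : ℝ => s ^ (a-2)) (Ioi 1) :=
      (integrableOn_Ioi_rpow_iff zero_lt_one).mpr (by linarith)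
    refine Integrable.mono' hbint
      (((aux_cont (a-1)).mono (Ioi_subset_Ioi zero_le_one)).aestronglyMeasurable
        measurableSet_Ioi) ?_
    refine (ae_restrict_iff' measurableSet_Ioi).mpr (ae_of_all _ fun s hs => ?_)
    have hs1 : (1:ℝ) < s := hs
    have hs0 : (0:ℝ) < s := by linarith
    rw [Real.norm_eq_abs, abs_of_nonneg (by positivity)]
    have e : s ^ (a-2) = s ^ (a-1) / s := by
      rw [show a-2 = (a-1)-1 by ring, Real.rpow_sub hs0, Real.rpow_one]
    rw [e]
    apply div_le_div_of_nonneg_left (by positivity) hs0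
    linarith
  have := h01.union h1i
  rwa [Set.Ioc_union_Ioi_eq_Ioi zero_le_one] at this

lemma aux_log_le (a : ℝ) (h0 : 0 < a) (s : ℝ) (hs : 1 ≤ s) :
    Real.log (1+s) ≤ (Real.log 2 + 2/a) * s ^ (a/2) := by
  have hs0 : (0:ℝ) < s := by linarith
  have h2 : Real.log (1+s) ≤ Real.log (2*s) := by
    apply Real.log_le_log (by linarith)
    linarith
  have h3 : Real.log (2*s) = Real.log 2 + Real.log s := Real.log_mul two_ne_zero (by linarith)
  have h4 : Real.log s ≤ (2/a) * s ^ (a/2) := by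
    have h5 : (a/2) * Real.log s = Real.log (s ^ (a/2)) := (Real.log_rpow hs0 _).symm
    have h6 : Real.log (s ^ (a/2)) ≤ s ^ (a/2) := by
      have := Real.log_le_sub_one_of_pos (Real.rpow_pos_of_pos hs0 (a/2))
      linarith
    rw [div_mul_eq_mul_div, le_div_iff₀ h0]
    nlinarith
  have h7 : (1:ℝ) ≤ s ^ (a/2) := Real.one_le_rpow hs (by positivity)
  have h8 : Real.log 2 ≤ Real.log 2 * s ^ (a/2) := by
    nlinarith [Real.log_pos one_lt_two]
  calc Real.log (1+s) ≤ Real.log 2 + Real.log s := by linarith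
    _ ≤ Real.log 2 * s ^ (a/2) + (2/a) * s ^ (a/2) := by linarith
    _ = (Real.log 2 + 2/a) * s ^ (a/2) := by ring

lemma aux_contP (b : ℝ) : ContinuousOn (fun s : ℝ => s ^ b * Real.log (1+s)) (Ioi 0) := by
  apply ContinuousOn.mul
  · exact continuousOn_id.rpow_const (fun s hs => Or.inl (ne_of_gt hs))
  · apply ContinuousOn.log
    · fun_prop
    · intro s hs; have : (0:ℝ) < s := hs; positivity

lemma aux_parts_integrable (a : ℝ) (h0 : 0 < a) (h1 : a < 1) :
    IntegrableOn (fun s : ℝ => s ^ (-a-1) * Real.log (1+s)) (Ioi 0) := by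
  have h01 : IntegrableOn (fun s : ℝ => s ^ (-a-1) * Real.log (1+s)) (Ioc 0 1) := by
    have hbint : IntegrableOn (fun s : ℝ => s ^ (-a)) (Ioc 0 1) := by
      have := intervalIntegral.intervalIntegrable_rpow' (a := 0) (b := 1)
        (show (-1:ℝ) < -a by linarith)
      rwa [intervalIntegrable_iff_integrableOn_Ioc_of_le zero_le_one] at this
    refine Integrable.mono' hbint
      (((aux_contP (-a-1)).mono Ioc_subset_Ioi_self).aestronglyMeasurable measurableSet_Ioc) ?_
    refine (ae_restrict_iff' measurableSet_Ioc).mpr (ae_of_all _ fun s hs => ?_)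
    have hs0 : (0:ℝ) < s := hs.1
    have hlog0 : (0:ℝ) ≤ Real.log (1+s) := Real.log_nonneg (by linarith)
    have hlog : Real.log (1+s) ≤ s := by
      have := Real.log_le_sub_one_of_pos (show (0:ℝ) < 1+s by linarith)
      linarith
    rw [Real.norm_eq_abs, abs_of_nonneg (by positivity)]
    calc s ^ (-a-1) * Real.log (1+s) ≤ s ^ (-a-1) * s := by
          exact mul_le_mul_of_nonneg_left hlog (by positivity)
      _ = s ^ (-a) := by
          rw [← Real.rpow_add_one (ne_of_gt hs0)]; ring_nf
  have h1i : IntegrableOn (fun s : ℝ => s ^ (-a-1) * Real.log (1+s)) (Ioi 1) := by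
    have hbint : IntegrableOn (fun s : ℝ => (Real.log 2 + 2/a) * s ^ (-1-a/2)) (Ioi 1) :=
      (((integrableOn_Ioi_rpow_iff zero_lt_one).mpr (by linarith)).const_mul _)
    refine Integrable.mono' hbint
      (((aux_contP (-a-1)).mono (Ioi_subset_Ioi zero_le_one)).aestronglyMeasurable
        measurableSet_Ioi) ?_
    refine (ae_restrict_iff' measurableSet_Ioi).mpr (ae_of_all _ fun s hs => ?_)
    have hs1 : (1:ℝ) < s := hs
    have hs0 : (0:ℝ) < s := by linarith
    have hlog0 : (0:ℝ) ≤ Real.log (1+s) := Real.log_nonneg (by linarith)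
    rw [Real.norm_eq_abs, abs_of_nonneg (by positivity)]
    calc s ^ (-a-1) * Real.log (1+s) ≤ s ^ (-a-1) * ((Real.log 2 + 2/a) * s ^ (a/2)) := by
          exact mul_le_mul_of_nonneg_left (aux_log_le a h0 s hs1.le) (by positivity)
      _ = (Real.log 2 + 2/a) * (s ^ (-a-1) * s ^ (a/2)) := by ring
      _ = (Real.log 2 + 2/a) * s ^ (-1-a/2) := by
          rw [← Real.rpow_add hs0]; ring_nf
  have := h01.union h1i
  rwa [Set.Ioc_union_Ioi_eq_Ioi zero_le_one] at this

lemma aux_uv_tendsto_zero (a : ℝ) (h0 : 0 < a) (h1 : a < 1) :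
    Tendsto (fun s : ℝ => Real.log (1+s) * s ^ (-a)) (nhdsWithin 0 (Ioi 0)) (𝓝 0) := by
  have hb : Tendsto (fun s : ℝ => s ^ (1-a)) (nhdsWithin 0 (Ioi 0)) (𝓝 0) := by
    have hc : ContinuousAt (fun s : ℝ => s ^ (1-a)) 0 :=
      Real.continuousAt_rpow_const 0 (1-a) (Or.inr (by linarith))
    have := (hc.continuousWithinAt (s := Ioi 0)).tendsto
    rwa [Real.zero_rpow (show (1:ℝ)-a ≠ 0 by intro h; linarith)] at this
  apply squeeze_zero' ?_ ?_ hb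
  · filter_upwards [self_mem_nhdsWithin] with s hs
    have hs0 : (0:ℝ) < s := hs
    have := Real.log_nonneg (show (1:ℝ) ≤ 1+s by linarith)
    positivity
  · filter_upwards [self_mem_nhdsWithin] with s hs
    have hs0 : (0:ℝ) < s := hs
    have hlog : Real.log (1+s) ≤ s := by
      have := Real.log_le_sub_one_of_pos (show (0:ℝ) < 1+s by linarith)
      linarith
    calc Real.log (1+s) * s ^ (-a) ≤ s * s ^ (-a) :=
          mul_le_mul_of_nonneg_right hlog (by positivity)
      _ = s ^ (1-a) := by
          rw [show (1:ℝ)-a = 1+(-a) by ring, Real.rpow_add hs0, Real.rpow_one]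

lemma aux_uv_tendsto_top (a : ℝ) (h0 : 0 < a) (h1 : a < 1) :
    Tendsto (fun s : ℝ => Real.log (1+s) * s ^ (-a)) atTop (𝓝 0) := by
  have hb : Tendsto (fun s : ℝ => (Real.log 2 + 2/a) * s ^ (-(a/2))) atTop (𝓝 0) := by
    have := (tendsto_rpow_neg_atTop (show (0:ℝ) < a/2 by linarith)).const_mul
      (Real.log 2 + 2/a)
    simpa using this
  apply squeeze_zero' ?_ ?_ hb
  · filter_upwards [eventually_ge_atTop (1:ℝ)] with s hs
    have hs0 : (0:ℝ) < s := by linarith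
    have := Real.log_nonneg (show (1:ℝ) ≤ 1+s by linarith)
    positivity
  · filter_upwards [eventually_ge_atTop (1:ℝ)] with s hs
    have hs0 : (0:ℝ) < s := by linarith
    calc Real.log (1+s) * s ^ (-a) ≤ ((Real.log 2 + 2/a) * s ^ (a/2)) * s ^ (-a) :=
          mul_le_mul_of_nonneg_right (aux_log_le a h0 s hs) (by positivity)
      _ = (Real.log 2 + 2/a) * (s ^ (a/2) * s ^ (-a)) := by ring
      _ = (Real.log 2 + 2/a) * s ^ (-(a/2)) := by
          rw [← Real.rpow_add hs0]; ring_nf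

lemma aux_parts (a : ℝ) (h0 : 0 < a) (h1 : a < 1) :
    ∫ s in Ioi (0:ℝ), Real.log (1+s) * (a * s ^ (-a-1)) = π / Real.sin (π * a) := by
  have key := MeasureTheory.integral_Ioi_mul_deriv_eq_deriv_mul (a := (0:ℝ))
    (u := fun s => Real.log (1+s)) (u' := fun s => (1+s)⁻¹)
    (v := fun s => -(s ^ (-a))) (v' := fun s => a * s ^ (-a-1))
    (a' := 0) (b' := 0) ?_ ?_ ?_ ?_ ?_ ?_
  · rw [key]
    have hval : ∫ s in Ioi (0:ℝ), (1+s)⁻¹ * -(s ^ (-a))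
        = -(π / Real.sin (π * a)) := by
      have hb := aux_beta (1-a) (by linarith) (by linarith)
      have : ∫ s in Ioi (0:ℝ), (1+s)⁻¹ * -(s ^ (-a))
          = -∫ s in Ioi (0:ℝ), s ^ ((1-a)-1) / (1+s) := by
        rw [← MeasureTheory.integral_neg]
        refine setIntegral_congr_fun measurableSet_Ioi (fun s hs => ?_)
        rw [show (1-a)-1 = -a by ring]
        field_simp
      rw [this, hb, show π * (1-a) = π - π * a by ring, Real.sin_pi_sub]
    rw [hval]
    ring
  · intro s hs
    have hs0 : (0:ℝ) < s := hs
    have h1s : (1:ℝ) + s ≠ 0 := by positivity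
    have := (((hasDerivAt_id s).const_add 1).log h1s)
    simpa using this
  · intro s hs
    have hs0 : (0:ℝ) < s := hs
    have := (Real.hasDerivAt_rpow_const (x := s) (p := -a) (Or.inl (ne_of_gt hs0))).neg
    exact this.congr_deriv (by ring)
  · -- IntegrableOn (u * v')
    have := (aux_parts_integrable a h0 h1).const_mul a
    refine MeasureTheory.IntegrableOn.congr_fun this (fun s hs => ?_) measurableSet_Ioi
    simp only [Pi.mul_apply]; ring
  · -- IntegrableOn (u' * v)
    have := (aux_beta_integrable (1-a) (by linarith) (by linarith)).neg
    refine MeasureTheory.IntegrableOn.congr_fun this (fun s hs => ?_) measurableSet_Ioi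
    have hs0 : (0:ℝ) < s := hs
    simp only [Pi.mul_apply, Pi.neg_apply]
    rw [show (1-a)-1 = -a by ring]
    field_simp
  · -- limit at 0
    have := (aux_uv_tendsto_zero a h0 h1).neg
    rw [neg_zero] at this
    refine this.congr (fun s => ?_)
    simp only [Pi.mul_apply]; ring
  · -- limit at ∞
    have := (aux_uv_tendsto_top a h0 h1).neg
    rw [neg_zero] at this
    refine this.congr (fun s => ?_)
    simp only [Pi.mul_apply]; ring

section subst

variable {ϱ x : ℝ}

lemma aux_f_deriv (hϱ0 : 0 < ϱ) (hx : 0 < x) : ∀ s ∈ Ioi (0:ℝ),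
    HasDerivWithinAt (fun s : ℝ => x ^ ϱ * s ^ (-ϱ)) (x ^ ϱ * (-ϱ * s ^ (-ϱ-1))) (Ioi 0) s := by
  intro s hs
  have hs0 : (0:ℝ) < s := hs
  exact ((Real.hasDerivAt_rpow_const (x := s) (p := -ϱ)
    (Or.inl (ne_of_gt hs0))).const_mul (x ^ ϱ)).hasDerivWithinAt

lemma aux_f_inj (hϱ0 : 0 < ϱ) (hx : 0 < x) :
    InjOn (fun s : ℝ => x ^ ϱ * s ^ (-ϱ)) (Ioi 0) := by
  intro s hs t ht h
  have hs0 : (0:ℝ) < s := hs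
  have ht0 : (0:ℝ) < t := ht
  have hxp : x ^ ϱ ≠ 0 := ne_of_gt (Real.rpow_pos_of_pos hx ϱ)
  have h2 : s ^ (-ϱ) = t ^ (-ϱ) := mul_left_cancel₀ hxp h
  rw [Real.rpow_neg hs0.le, Real.rpow_neg ht0.le, inv_inj] at h2
  rcases lt_trichotomy s t with hlt | heq | hgt
  · exact absurd h2 (ne_of_lt (Real.rpow_lt_rpow hs0.le hlt hϱ0))
  · exact heq
  · exact absurd h2.symm (ne_of_lt (Real.rpow_lt_rpow ht0.le hgt hϱ0))

lemma aux_f_image (hϱ0 : 0 < ϱ) (hx : 0 < x) :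
    (fun s : ℝ => x ^ ϱ * s ^ (-ϱ)) '' (Ioi 0) = Ioi 0 := by
  ext y
  constructor
  · rintro ⟨s, hs, rfl⟩
    have hs0 : (0:ℝ) < s := hs
    exact mul_pos (Real.rpow_pos_of_pos hx ϱ) (Real.rpow_pos_of_pos hs0 (-ϱ))
  · intro hy
    have hy0 : (0:ℝ) < y := hy
    refine ⟨x * y ^ (-(1/ϱ)), ?_, ?_⟩
    · exact mul_pos hx (Real.rpow_pos_of_pos hy0 _)
    · have h1 : (x * y ^ (-(1/ϱ))) ^ (-ϱ) = x ^ (-ϱ) * y := by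
        rw [Real.mul_rpow hx.le (Real.rpow_pos_of_pos hy0 _).le,
          ← Real.rpow_mul hy0.le]
        congr 1
        rw [show -(1/ϱ) * -ϱ = 1 by field_simp, Real.rpow_one]
      simp only [h1]
      rw [← mul_assoc, ← Real.rpow_add hx, add_neg_cancel, Real.rpow_zero, one_mul]

lemma aux_f_comp (hϱ0 : 0 < ϱ) (hx : 0 < x) (s : ℝ) (hs0 : 0 < s) :
    1 + x * (x ^ ϱ * s ^ (-ϱ)) ^ (-(1/ϱ)) = 1 + s := by
  have hsp : (0:ℝ) < s ^ (-ϱ) := Real.rpow_pos_of_pos hs0 _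
  rw [Real.mul_rpow (Real.rpow_pos_of_pos hx ϱ).le hsp.le,
    ← Real.rpow_mul hx.le, ← Real.rpow_mul hs0.le,
    show ϱ * -(1/ϱ) = -1 by field_simp,
    show -ϱ * -(1/ϱ) = 1 by field_simp,
    Real.rpow_one, Real.rpow_neg hx.le, Real.rpow_one]
  field_simp

lemma aux_f_absderiv (hϱ0 : 0 < ϱ) (hx : 0 < x) (s : ℝ) (hs0 : 0 < s) :
    |x ^ ϱ * (-ϱ * s ^ (-ϱ-1))| = x ^ ϱ * (ϱ * s ^ (-ϱ-1)) := by
  have h1 : x ^ ϱ * (-ϱ * s ^ (-ϱ-1)) = -(x ^ ϱ * (ϱ * s ^ (-ϱ-1))) := by ring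
  rw [h1, abs_neg, abs_of_pos]
  exact mul_pos (Real.rpow_pos_of_pos hx ϱ) (mul_pos hϱ0 (Real.rpow_pos_of_pos hs0 _))

lemma aux_subst_integrable (hϱ0 : 0 < ϱ) (hϱ1 : ϱ < 1) (hx : 0 < x) :
    IntegrableOn (fun t : ℝ => Real.log (1 + x * t ^ (-(1/ϱ)))) (Ioi 0) := by
  have hiff := MeasureTheory.integrableOn_image_iff_integrableOn_abs_deriv_smul
    measurableSet_Ioi (aux_f_deriv hϱ0 hx) (aux_f_inj hϱ0 hx)
    (fun t : ℝ => Real.log (1 + x * t ^ (-(1/ϱ))))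
  rw [aux_f_image hϱ0 hx] at hiff
  rw [hiff]
  have base := ((aux_parts_integrable ϱ hϱ0 hϱ1).const_mul (x ^ ϱ * ϱ))
  refine MeasureTheory.IntegrableOn.congr_fun base (fun s hs => ?_) measurableSet_Ioi
  have hs0 : (0:ℝ) < s := hs
  rw [smul_eq_mul, aux_f_absderiv hϱ0 hx s hs0, aux_f_comp hϱ0 hx s hs0]
  ring

lemma aux_subst (hϱ0 : 0 < ϱ) (hϱ1 : ϱ < 1) (hx : 0 < x) :
    ∫ t in Ioi (0:ℝ), Real.log (1 + x * t ^ (-(1/ϱ)))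
      = π / Real.sin (π * ϱ) * x ^ ϱ := by
  have himg := MeasureTheory.integral_image_eq_integral_abs_deriv_smul
    measurableSet_Ioi (aux_f_deriv hϱ0 hx) (aux_f_inj hϱ0 hx)
    (fun t : ℝ => Real.log (1 + x * t ^ (-(1/ϱ))))
  rw [aux_f_image hϱ0 hx] at himg
  rw [himg]
  have heq : ∫ s in Ioi (0:ℝ),
      |x ^ ϱ * (-ϱ * s ^ (-ϱ-1))| • Real.log (1 + x * (x ^ ϱ * s ^ (-ϱ)) ^ (-(1/ϱ)))
      = ∫ s in Ioi (0:ℝ), x ^ ϱ * (Real.log (1+s) * (ϱ * s ^ (-ϱ-1))) := by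
    refine setIntegral_congr_fun measurableSet_Ioi (fun s hs => ?_)
    have hs0 : (0:ℝ) < s := hs
    rw [smul_eq_mul, aux_f_absderiv hϱ0 hx s hs0, aux_f_comp hϱ0 hx s hs0]
    ring
  rw [heq, MeasureTheory.integral_const_mul, aux_parts ϱ hϱ0 hϱ1]
  ring

end subst

lemma aux_exp_image : (fun u : ℝ => Real.exp (-u)) '' (Ioi 0) = Ioo 0 1 := by
  ext y
  constructor
  · rintro ⟨u, hu, rfl⟩
    have hu0 : (0:ℝ) < u := hu
    exact ⟨Real.exp_pos _, by rw [Real.exp_lt_one_iff]; linarith⟩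
  · rintro ⟨hy0, hy1⟩
    refine ⟨-Real.log y, ?_, ?_⟩
    · simp only [mem_Ioi]
      linarith [Real.log_neg hy0 hy1]
    · simp [Real.exp_log hy0]

lemma aux_log_int : IntegrableOn Real.log (Ioc (0:ℝ) 1) ∧
    ∫ t in Ioc (0:ℝ) 1, Real.log t = -1 := by
  have hderiv : ∀ u ∈ Ioi (0:ℝ), HasDerivWithinAt (fun u : ℝ => Real.exp (-u))
      (-Real.exp (-u)) (Ioi 0) u := by
    intro u hu
    have h : HasDerivAt (fun u : ℝ => Real.exp (-u)) (Real.exp (-u) * -1) u :=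
      (hasDerivAt_neg u).exp
    rw [mul_neg_one] at h
    exact h.hasDerivWithinAt
  have hinj : InjOn (fun u : ℝ => Real.exp (-u)) (Ioi 0) := by
    intro s hs t ht h
    have := Real.exp_injective h
    linarith
  have hG := Real.GammaIntegral_convergent (s := 2) (by norm_num)
  have hGi : IntegrableOn (fun u : ℝ => |-Real.exp (-u)| • Real.log (Real.exp (-u)))
      (Ioi 0) := by
    refine MeasureTheory.IntegrableOn.congr_fun hG.neg (fun u hu => ?_) measurableSet_Ioi
    have hu0 : (0:ℝ) < u := hu
    simp only [Pi.neg_apply]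
    rw [smul_eq_mul, abs_neg, abs_of_pos (Real.exp_pos _), Real.log_exp]
    norm_num [Real.rpow_one]
  have hint : IntegrableOn Real.log (Ioo (0:ℝ) 1) := by
    rw [← aux_exp_image]
    rw [MeasureTheory.integrableOn_image_iff_integrableOn_abs_deriv_smul
      measurableSet_Ioi hderiv hinj]
    exact hGi
  constructor
  · rw [integrableOn_Ioc_iff_integrableOn_Ioo]
    exact hint
  · rw [MeasureTheory.integral_Ioc_eq_integral_Ioo, ← aux_exp_image,
      MeasureTheory.integral_image_eq_integral_abs_deriv_smul
        measurableSet_Ioi hderiv hinj]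
    have : ∫ u in Ioi (0:ℝ), |-Real.exp (-u)| • Real.log (Real.exp (-u))
        = -∫ u in Ioi (0:ℝ), Real.exp (-u) * u ^ ((2:ℝ)-1) := by
      rw [← MeasureTheory.integral_neg]
      refine setIntegral_congr_fun measurableSet_Ioi (fun u hu => ?_)
      rw [smul_eq_mul, abs_neg, abs_of_pos (Real.exp_pos _), Real.log_exp]
      rw [show (2:ℝ)-1 = 1 by norm_num, Real.rpow_one]
      ring
    rw [this, ← Real.Gamma_eq_integral (by norm_num : (0:ℝ) < 2), Real.Gamma_two]

section main

variable {ϱ x : ℝ}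

lemma aux_affine_int (c d : ℝ) :
    IntegrableOn (fun t : ℝ => d - c * Real.log t) (Ioc 0 1) ∧
    ∫ t in Ioc (0:ℝ) 1, (d - c * Real.log t) = d + c := by
  have hconst : IntegrableOn (fun _ : ℝ => d) (Ioc 0 1) :=
    integrableOn_const measure_Ioc_lt_top.ne
  have hlog := aux_log_int.1.const_mul c
  constructor
  · exact hconst.sub hlog
  · rw [MeasureTheory.integral_sub hconst hlog, MeasureTheory.integral_const,
      MeasureTheory.integral_const_mul, aux_log_int.2]
    simp [Real.volume_Ioc]

lemma aux_K_upper (hϱ0 : 0 < ϱ) (hϱ1 : ϱ < 1) (hx : 0 < x) :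
    ∫ t in Ioc (0:ℝ) 1, Real.log (1 + x * t ^ (-(1/ϱ)))
      ≤ Real.log (1+x) + 1/ϱ := by
  have hGint : IntegrableOn (fun t : ℝ => Real.log (1 + x * t ^ (-(1/ϱ)))) (Ioc 0 1) :=
    (aux_subst_integrable hϱ0 hϱ1 hx).mono_set Ioc_subset_Ioi_self
  have h := MeasureTheory.setIntegral_mono_on hGint (aux_affine_int (1/ϱ) (Real.log (1+x))).1
    measurableSet_Ioc ?_
  · rw [(aux_affine_int (1/ϱ) (Real.log (1+x))).2] at h
    exact h
  · intro t ht
    have ht0 : (0:ℝ) < t := ht.1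
    have ht1 : t ≤ 1 := ht.2
    have hu0 : (0:ℝ) < t ^ (1/ϱ) := Real.rpow_pos_of_pos ht0 _
    have hτ : t ^ (-(1/ϱ)) = (t ^ (1/ϱ))⁻¹ := Real.rpow_neg ht0.le _
    have hu1 : t ^ (1/ϱ) ≤ 1 := Real.rpow_le_one ht0.le ht1 (by positivity)
    have hinv1 : (1:ℝ) ≤ (t ^ (1/ϱ))⁻¹ := (one_le_inv₀ hu0).mpr hu1
    have hstep : 1 + x * t ^ (-(1/ϱ)) ≤ (1+x) * (t ^ (1/ϱ))⁻¹ := by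
      rw [hτ]; nlinarith
    have hlog := Real.log_le_log (by positivity) hstep
    rw [Real.log_mul (by positivity) (by positivity), Real.log_inv,
      Real.log_rpow ht0] at hlog
    calc Real.log (1 + x * t ^ (-(1/ϱ))) ≤ Real.log (1+x) + -(1/ϱ * Real.log t) := hlog
      _ = Real.log (1+x) - 1/ϱ * Real.log t := by ring

lemma aux_K_lower (hϱ0 : 0 < ϱ) (hϱ1 : ϱ < 1) (hx : 0 < x) :
    Real.log (1+x) + (x/(1+x)) * (1/ϱ)
      ≤ ∫ t in Ioc (0:ℝ) 1, Real.log (1 + x * t ^ (-(1/ϱ))) := by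
  set θ : ℝ := x/(1+x) with hθ
  have hx1 : (0:ℝ) < 1 + x := by linarith
  have hθ0 : 0 ≤ θ := by positivity
  have hθ1 : θ ≤ 1 := by rw [hθ, div_le_one hx1]; linarith
  have hGint : IntegrableOn (fun t : ℝ => Real.log (1 + x * t ^ (-(1/ϱ)))) (Ioc 0 1) :=
    (aux_subst_integrable hϱ0 hϱ1 hx).mono_set Ioc_subset_Ioi_self
  have h := MeasureTheory.setIntegral_mono_on (aux_affine_int (θ * (1/ϱ)) (Real.log (1+x))).1
    hGint measurableSet_Ioc ?_
  · rw [(aux_affine_int (θ * (1/ϱ)) (Real.log (1+x))).2] at h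
    exact h
  · intro t ht
    have ht0 : (0:ℝ) < t := ht.1
    have ht1 : t ≤ 1 := ht.2
    set u : ℝ := t ^ (1/ϱ) with hu
    have hu0 : (0:ℝ) < u := Real.rpow_pos_of_pos ht0 _
    have hτ : t ^ (-(1/ϱ)) = u⁻¹ := Real.rpow_neg ht0.le _
    have amgm := Real.geom_mean_le_arith_mean2_weighted hθ0 (by linarith : (0:ℝ) ≤ 1 - θ)
      zero_le_one hu0.le (by ring : θ + (1 - θ) = 1)
    rw [Real.one_rpow, one_mul, mul_one] at amgm
    -- (1+x) * u^(1-θ) ≤ x + u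
    have hmul : (1+x) * u ^ (1-θ) ≤ x + u := by
      have e1 : (1+x) * θ = x := by rw [hθ]; field_simp
      have e2 : (1+x) * (1-θ) = 1 := by rw [hθ]; field_simp; ring
      nlinarith [Real.rpow_pos_of_pos hu0 (1-θ)]
    have hkey : (1+x) * u ^ (-θ) ≤ 1 + x * u⁻¹ := by
      have e3 : u ^ (-θ : ℝ) = u ^ (1-θ) / u := by
        rw [show -θ = (1-θ) - 1 by ring, Real.rpow_sub hu0, Real.rpow_one]
      rw [e3, mul_div_assoc']
      rw [div_le_iff₀ hu0]
      have : (1 + x * u⁻¹) * u = u + x := by field_simp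
      rw [this]
      linarith
    have hlog := Real.log_le_log (by positivity) hkey
    rw [Real.log_mul (by positivity) (by positivity)] at hlog
    have hlogu : Real.log (u ^ (-θ : ℝ)) = -θ * Real.log u := Real.log_rpow hu0 _
    have hlogt : Real.log u = 1/ϱ * Real.log t := Real.log_rpow ht0 _
    rw [hτ]
    rw [hlogu, hlogt] at hlog
    calc Real.log (1+x) - θ * (1/ϱ) * Real.log t
        = Real.log (1+x) + -θ * (1/ϱ * Real.log t) := by ring
      _ ≤ Real.log (1 + x * u⁻¹) := hlog

end main

section sums

variable {ϱ x : ℝ}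

lemma aux_G_nonneg (hx : 0 < x) (t : ℝ) (ht : 0 < t) :
    0 ≤ Real.log (1 + x * t ^ (-(1/ϱ))) := by
  apply Real.log_nonneg
  have := Real.rpow_pos_of_pos ht (-(1/ϱ))
  nlinarith

lemma aux_G_anti (hϱ0 : 0 < ϱ) (hx : 0 < x) {s t : ℝ} (hs : 0 < s) (hst : s ≤ t) :
    Real.log (1 + x * t ^ (-(1/ϱ))) ≤ Real.log (1 + x * s ^ (-(1/ϱ))) := by
  have ht0 : (0:ℝ) < t := lt_of_lt_of_le hs hst
  have hr := Real.rpow_le_rpow_of_nonpos hs hst (neg_nonpos.mpr (by positivity : (0:ℝ) ≤ 1/ϱ))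
  apply Real.log_le_log
  · have := Real.rpow_pos_of_pos ht0 (-(1/ϱ)); nlinarith
  · nlinarith

lemma aux_summable (hϱ0 : 0 < ϱ) (hϱ1 : ϱ < 1) (hx : 0 < x) :
    Summable fun k : ℕ => Real.log (1 + x * ((k:ℝ)+1) ^ (-(1/ϱ))) := by
  have hexp : -(1/ϱ) < -1 := by
    have : (1:ℝ) < 1/ϱ := by rw [lt_div_iff₀ hϱ0]; linarith
    linarith
  have hmaj : Summable fun k : ℕ => ((k:ℝ)+1) ^ (-(1/ϱ)) := by
    have := (summable_nat_add_iff (f := fun n : ℕ => (n:ℝ) ^ (-(1/ϱ))) 1).mpr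
      (Real.summable_nat_rpow.mpr hexp)
    refine this.congr (fun k => ?_)
    push_cast
    ring_nf
  refine Summable.of_nonneg_of_le (fun k => aux_G_nonneg hx _ (by positivity)) ?_
    (hmaj.mul_left x)
  intro k
  have hb : (0:ℝ) < ((k:ℝ)+1) ^ (-(1/ϱ)) := Real.rpow_pos_of_pos (by positivity) _
  have := Real.log_le_sub_one_of_pos (show (0:ℝ) < 1 + x * ((k:ℝ)+1) ^ (-(1/ϱ)) by nlinarith)
  linarith

lemma aux_G_antiOn (hϱ0 : 0 < ϱ) (hx : 0 < x) (n : ℕ) :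
    AntitoneOn (fun t : ℝ => Real.log (1 + x * t ^ (-(1/ϱ)))) (Icc 1 (1 + (n:ℕ))) := by
  intro s hs t ht hst
  exact aux_G_anti hϱ0 hx (lt_of_lt_of_le one_pos hs.1) hst

lemma aux_S_lower (hϱ0 : 0 < ϱ) (hϱ1 : ϱ < 1) (hx : 0 < x) :
    ∫ t in Ioi (1:ℝ), Real.log (1 + x * t ^ (-(1/ϱ)))
      ≤ ∑' k : ℕ, Real.log (1 + x * ((k:ℝ)+1) ^ (-(1/ϱ))) := by
  have hGint : IntegrableOn (fun t : ℝ => Real.log (1 + x * t ^ (-(1/ϱ)))) (Ioi 1) :=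
    (aux_subst_integrable hϱ0 hϱ1 hx).mono_set (Ioi_subset_Ioi zero_le_one)
  have htend := MeasureTheory.intervalIntegral_tendsto_integral_Ioi 1 hGint
    (tendsto_atTop_add_const_left atTop (1:ℝ) tendsto_natCast_atTop_atTop)
  refine le_of_tendsto htend (Eventually.of_forall fun n => ?_)
  calc ∫ t in (1:ℝ)..(1 + (n:ℝ)), Real.log (1 + x * t ^ (-(1/ϱ)))
      ≤ ∑ i ∈ Finset.range n, Real.log (1 + x * ((1:ℝ) + (i:ℝ)) ^ (-(1/ϱ))) := by
        have := (aux_G_antiOn (ϱ := ϱ) hϱ0 hx n).integral_le_sum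
        simpa using this
    _ = ∑ i ∈ Finset.range n, Real.log (1 + x * ((i:ℝ) + 1) ^ (-(1/ϱ))) := by
        refine Finset.sum_congr rfl (fun i _ => ?_)
        rw [add_comm (1:ℝ) (i:ℝ)]
    _ ≤ ∑' k : ℕ, Real.log (1 + x * ((k:ℝ)+1) ^ (-(1/ϱ))) := by
        exact (aux_summable hϱ0 hϱ1 hx).sum_le_tsum (Finset.range n)
          (fun i _ => aux_G_nonneg hx _ (by positivity))

lemma aux_S_upper (hϱ0 : 0 < ϱ) (hϱ1 : ϱ < 1) (hx : 0 < x) :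
    ∑' k : ℕ, Real.log (1 + x * ((k:ℝ)+1) ^ (-(1/ϱ)))
      ≤ Real.log (1 + x) + ∫ t in Ioi (1:ℝ), Real.log (1 + x * t ^ (-(1/ϱ))) := by
  have hGint : IntegrableOn (fun t : ℝ => Real.log (1 + x * t ^ (-(1/ϱ)))) (Ioi 1) :=
    (aux_subst_integrable hϱ0 hϱ1 hx).mono_set (Ioi_subset_Ioi zero_le_one)
  have hsum := aux_summable hϱ0 hϱ1 hx
  rw [hsum.tsum_eq_zero_add]
  have h0 : Real.log (1 + x * (((0:ℕ):ℝ)+1) ^ (-(1/ϱ))) = Real.log (1 + x) := by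
    norm_num [Real.one_rpow]
  rw [h0]
  gcongr
  refine Real.tsum_le_of_sum_range_le
    (fun k => aux_G_nonneg hx _ (by positivity)) (fun n => ?_)
  calc ∑ i ∈ Finset.range n, Real.log (1 + x * (((i+1:ℕ):ℝ)+1) ^ (-(1/ϱ)))
      = ∑ i ∈ Finset.range n, Real.log (1 + x * ((1:ℝ) + ((i:ℕ)+1:ℕ)) ^ (-(1/ϱ))) := by
        refine Finset.sum_congr rfl (fun i _ => ?_)
        push_cast
        ring_nf
    _ ≤ ∫ t in (1:ℝ)..(1 + (n:ℝ)), Real.log (1 + x * t ^ (-(1/ϱ))) := by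
        have := (aux_G_antiOn (ϱ := ϱ) hϱ0 hx n).sum_le_integral
        simpa using this
    _ ≤ ∫ t in Ioi (1:ℝ), Real.log (1 + x * t ^ (-(1/ϱ))) := by
        rw [intervalIntegral.integral_of_le (by linarith [Nat.cast_nonneg (α := ℝ) n])]
        refine MeasureTheory.setIntegral_mono_set hGint ?_ ?_
        · refine (ae_restrict_iff' measurableSet_Ioi).mpr (ae_of_all _ fun t ht => ?_)
          exact aux_G_nonneg hx t (lt_trans one_pos ht)
        · exact HasSubset.Subset.eventuallyLE Ioc_subset_Ioi_self

end sums

/-- Let `ϱ ∈ (0,1)`, `a_k = k^(1/ϱ)`, `F(x) = ∏_{k=1}^∞ (1 + x/a_k)`. Then for `x > 0`,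
`F(x) = exp((π/sin(πϱ)) x^ϱ)·ψ(x)` with
`exp(-1/ϱ)/(1+x) ≤ ψ(x) ≤ exp(-(1/ϱ)·x/(1+x))`. -/
theorem stmt_15 (ϱ : ℝ) (hϱ0 : 0 < ϱ) (hϱ1 : ϱ < 1)
    (F : ℝ → ℝ) (hF : ∀ x : ℝ, F x = ∏' k : ℕ, (1 + x / ((k : ℝ) + 1) ^ (1 / ϱ)))
    (x : ℝ) (hx : 0 < x) :
    Real.exp (-(1 / ϱ)) / (1 + x) ≤
        F x * Real.exp (-(Real.pi / Real.sin (Real.pi * ϱ)) * x ^ ϱ) ∧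
      F x * Real.exp (-(Real.pi / Real.sin (Real.pi * ϱ)) * x ^ ϱ) ≤
        Real.exp (-(1 / ϱ) * (x / (1 + x))) := by
  have hx1 : (0:ℝ) < 1 + x := by linarith
  have hsum := aux_summable hϱ0 hϱ1 hx
  set S : ℝ := ∑' k : ℕ, Real.log (1 + x * ((k:ℝ)+1) ^ (-(1/ϱ))) with hS
  have hprod : F x = Real.exp S := by
    rw [hF x]
    have hterm : ∀ k : ℕ, (1 : ℝ) + x / ((k:ℝ)+1) ^ (1/ϱ) = 1 + x * ((k:ℝ)+1) ^ (-(1/ϱ)) := by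
      intro k
      rw [Real.rpow_neg (by positivity), div_eq_mul_inv]
    have hpos : ∀ (_ : Unit) (k : ℕ), 0 < 1 + x * ((k:ℝ)+1) ^ (-(1/ϱ)) := by
      intro _ k
      have := Real.rpow_pos_of_pos (show (0:ℝ) < (k:ℝ)+1 by positivity) (-(1/ϱ))
      nlinarith
    have hexp := Real.rexp_tsum_eq_tprod
      (f := fun k : ℕ => 1 + x * ((k:ℝ)+1) ^ (-(1/ϱ))) (hpos ()) hsum
    calc ∏' k : ℕ, (1 + x / ((k:ℝ)+1) ^ (1/ϱ))
        = ∏' k : ℕ, (1 + x * ((k:ℝ)+1) ^ (-(1/ϱ))) := tprod_congr hterm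
      _ = Real.exp S := hexp.symm
  have hIoi0 := aux_subst hϱ0 hϱ1 hx
  have hsplit := (MeasureTheory.setIntegral_union (Ioc_disjoint_Ioi le_rfl)
    measurableSet_Ioi
    ((aux_subst_integrable hϱ0 hϱ1 hx).mono_set Ioc_subset_Ioi_self)
    ((aux_subst_integrable hϱ0 hϱ1 hx).mono_set (Ioi_subset_Ioi zero_le_one)))
  rw [Set.Ioc_union_Ioi_eq_Ioi zero_le_one] at hsplit
  rw [hIoi0] at hsplit
  -- hsplit : π/sin(πϱ)*x^ϱ = ∫ Ioc 0 1 + ∫ Ioi 1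
  have hKu := aux_K_upper hϱ0 hϱ1 hx
  have hKl := aux_K_lower hϱ0 hϱ1 hx
  have hSl := aux_S_lower hϱ0 hϱ1 hx
  have hSu := aux_S_upper hϱ0 hϱ1 hx
  rw [← hS] at hSl hSu
  have hlow : π / Real.sin (π * ϱ) * x ^ ϱ - Real.log (1+x) - 1/ϱ ≤ S := by linarith
  have hup : S ≤ π / Real.sin (π * ϱ) * x ^ ϱ - (x/(1+x)) * (1/ϱ) := by linarith
  constructor
  · rw [hprod, ← Real.exp_add,
      show (1:ℝ)+x = Real.exp (Real.log (1+x)) from (Real.exp_log hx1).symm,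
      ← Real.exp_sub, Real.exp_le_exp, neg_mul]
    linarith
  · rw [hprod, ← Real.exp_add, Real.exp_le_exp, neg_mul]
    have : (x/(1+x)) * (1/ϱ) = 1/ϱ * (x/(1+x)) := by ring
    linarith [hup, this]
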